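/- There exists a regular language L ⊆ Σ* such that: (1) L_C(ω) ⊆ L; and (2) every word w ∈ L \ L_C(ω) admits a factorization w = w₁ u w₂ such that φ(u) is stable, ω(u) > 0, and ω(w') ≥ 0 for every prefix w' of w₁u. -/

import Mathlib

/-- A matrix `M` is *stable* if `rank M = rank M²`. -/
def MatStable {d : ℕ} (M : Matrix (Fin d) (Fin d) ℚ) : Prop :=
  M.rank = (M * M).rank

/-- The coverability language of `ω`: words all of whose prefixes have nonnegative
weight. -/
def coverLang {α : Type*} (ω : List α → ℤ) : Set (List α) :=
  {w | ∀ u : List α, u <+: w → 0 ≤ ω u}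

namespace CoverAux
open Matrix Function Module Submodule

open Matrix Function Module Submodule


section RankLemmas

variable {m n k : ℕ}

lemma rank_mul_eq_of_inj (A : Matrix (Fin m) (Fin n) ℚ) (M : Matrix (Fin n) (Fin k) ℚ)
    (h : Function.Injective A.mulVecLin) : (A * M).rank = M.rank := by
  unfold Matrix.rank
  rw [Matrix.mulVecLin_mul, LinearMap.range_comp]
  exact (LinearEquiv.finrank_eq (Submodule.equivMapOfInjective A.mulVecLin h _)).symm

lemma rank_mul_eq_of_surj (M : Matrix (Fin m) (Fin n) ℚ) (Q : Matrix (Fin n) (Fin k) ℚ)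
    (h : Function.Surjective Q.mulVecLin) : (M * Q).rank = M.rank := by
  unfold Matrix.rank
  rw [Matrix.mulVecLin_mul, LinearMap.range_comp, LinearMap.range_eq_top.mpr h,
    Submodule.map_top]

lemma isUnit_mulVecLin_bij {A : Matrix (Fin n) (Fin n) ℚ} (h : IsUnit A) :
    Function.Bijective A.mulVecLin := by
  obtain ⟨B, hB1, hB2⟩ : ∃ B : Matrix (Fin n) (Fin n) ℚ, B * A = 1 ∧ A * B = 1 := by
    rcases h.nonempty_invertible with ⟨inv⟩
    exact ⟨⅟A, invOf_mul_self A, mul_invOf_self A⟩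
  constructor
  · intro x y hxy
    have h1 : (B * A).mulVecLin x = (B * A).mulVecLin y := by
      simp only [Matrix.mulVecLin_mul, LinearMap.comp_apply, hxy]
    simpa [hB1] using h1
  · intro y
    refine ⟨B.mulVecLin y, ?_⟩
    have h2 : (A * B).mulVecLin y = y := by simp [hB2]
    simpa [Matrix.mulVecLin_mul] using h2

lemma rank_unit_mul {A : Matrix (Fin n) (Fin n) ℚ} (h : IsUnit A)
    (M : Matrix (Fin n) (Fin k) ℚ) : (A * M).rank = M.rank :=
  rank_mul_eq_of_inj A M (isUnit_mulVecLin_bij h).1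

lemma rank_mul_unit {A : Matrix (Fin n) (Fin n) ℚ} (h : IsUnit A)
    (M : Matrix (Fin k) (Fin n) ℚ) : (M * A).rank = M.rank :=
  rank_mul_eq_of_surj M A (isUnit_mulVecLin_bij h).2

lemma exists_factor_left (P : Matrix (Fin m) (Fin n) ℚ) (X : Matrix (Fin m) (Fin k) ℚ)
    (h : LinearMap.range X.mulVecLin ≤ LinearMap.range P.mulVecLin) :
    ∃ B : Matrix (Fin n) (Fin k) ℚ, X = P * B := by
  have hcol : ∀ j : Fin k, ∃ y : Fin n → ℚ, P.mulVec y = fun i => X i j := by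
    intro j
    have : (fun i => X i j) ∈ LinearMap.range X.mulVecLin := by
      refine ⟨Pi.single j 1, ?_⟩
      ext i
      simp [Matrix.mulVecLin_apply, Matrix.mulVec_single]
    exact h this
  choose y hy using hcol
  refine ⟨Matrix.of (fun a j => y j a), ?_⟩
  ext i j
  have := congrFun (hy j) i
  simpa [Matrix.mul_apply, Matrix.mulVec, dotProduct] using this.symm

lemma isUnit_of_rank_eq (A : Matrix (Fin n) (Fin n) ℚ) (h : A.rank = n) : IsUnit A := by
  have hsurj : LinearMap.range A.mulVecLin = ⊤ := by
    apply Submodule.eq_top_of_finrank_eq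
    rw [← Matrix.rank, h, Module.finrank_fintype_fun_eq_card, Fintype.card_fin]
  obtain ⟨B, hB⟩ := exists_factor_left A (1 : Matrix (Fin n) (Fin n) ℚ)
    (by rw [hsurj]; exact le_top)
  have : Invertible A := invertibleOfRightInverse A B hB.symm
  exact isUnit_of_invertible A

end RankLemmas



section BasisMat
variable {d r : ℕ}

/-- matrix whose columns are the given basis of a submodule of `Fin d → ℚ` -/
noncomputable def basisMat (U : Submodule ℚ (Fin d → ℚ)) (h : finrank ℚ U = r) :
    Matrix (Fin d) (Fin r) ℚ :=
  Matrix.of fun i j => ((Module.finBasisOfFinrankEq ℚ U h) j : Fin d → ℚ) i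

lemma basisMat_mulVecLin (U : Submodule ℚ (Fin d → ℚ)) (h : finrank ℚ U = r) :
    (basisMat U h).mulVecLin
      = U.subtype ∘ₗ ((Module.finBasisOfFinrankEq ℚ U h).equivFun.symm : (Fin r → ℚ) →ₗ[ℚ] U) := by
  set b := Module.finBasisOfFinrankEq ℚ U h
  apply LinearMap.ext; intro x; funext i
  simp only [Matrix.mulVecLin_apply, LinearMap.comp_apply, Submodule.subtype_apply,
    Module.Basis.equivFun_symm_apply]
  rw [Matrix.mulVec]
  have h2 : ((∑ j, x j • b j : U) : Fin d → ℚ) i = ∑ j, x j * (b j : Fin d → ℚ) i := by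
    push_cast [Submodule.coe_sum]
    simp [Finset.sum_apply]
  simp only [LinearEquiv.coe_coe, Module.Basis.equivFun_symm_apply]
  rw [h2]
  simp [dotProduct, basisMat, mul_comm]
  rfl

lemma basisMat_inj (U : Submodule ℚ (Fin d → ℚ)) (h : finrank ℚ U = r) :
    Function.Injective (basisMat U h).mulVecLin := by
  rw [basisMat_mulVecLin]
  exact (Submodule.injective_subtype U).comp (LinearEquiv.injective _)

lemma basisMat_range (U : Submodule ℚ (Fin d → ℚ)) (h : finrank ℚ U = r) :
    LinearMap.range (basisMat U h).mulVecLin = U := by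
  rw [basisMat_mulVecLin, LinearMap.range_comp, LinearEquiv.range, Submodule.map_top,
    Submodule.range_subtype]

lemma basisMat_rank (U : Submodule ℚ (Fin d → ℚ)) (h : finrank ℚ U = r) :
    (basisMat U h).rank = r := by
  rw [Matrix.rank, basisMat_range, h]

end BasisMat



section CB
variable {r d : ℕ}

lemma det_mul_expand (Q : Matrix (Fin r) (Fin d) ℚ) (P : Matrix (Fin d) (Fin r) ℚ) :
    (Q * P).det = ∑ g : Fin r → Fin d, (∏ i, Q i (g i)) * (P.submatrix g id).det := by
  have hrow : (Q * P) = Matrix.of (fun i => ∑ k : Fin d, Q i k • (fun j => P k j)) := by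
    ext i j
    simp [Matrix.mul_apply, Finset.sum_apply]
  rw [hrow]
  have hms := (Matrix.detRowAlternating :
      (Fin r → ℚ) [⋀^Fin r]→ₗ[ℚ] ℚ).toMultilinearMap.map_sum
      (g := fun i (k : Fin d) => Q i k • (fun j => P k j))
  have h1 : (Matrix.of (fun i => ∑ k : Fin d, Q i k • (fun j => P k j))).det
      = ((Matrix.detRowAlternating :
      (Fin r → ℚ) [⋀^Fin r]→ₗ[ℚ] ℚ).toMultilinearMap
        (fun i => ∑ k : Fin d, Q i k • (fun j : Fin r => P k j))) := rfl
  rw [h1, hms]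
  apply Finset.sum_congr rfl
  intro g _
  have h2 := (Matrix.detRowAlternating :
      (Fin r → ℚ) [⋀^Fin r]→ₗ[ℚ] ℚ).toMultilinearMap.map_smul_univ
      (fun i => Q i (g i)) (fun i => (fun j : Fin r => P (g i) j))
  rw [h2, smul_eq_mul]
  congr 1

end CB



section Tri

lemma triangular_li {V : Type*} [AddCommGroup V] [Module ℚ V] {n : ℕ}
    (z : Fin n → V) (f : Fin n → V →ₗ[ℚ] ℚ)
    (hdiag : ∀ t, f t (z t) ≠ 0) (hlt : ∀ s t, s < t → f t (z s) = 0) :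
    LinearIndependent ℚ z := by
  rw [Fintype.linearIndependent_iff]
  intro g hg
  by_contra hne
  push_neg at hne
  obtain ⟨i0, hi0⟩ := hne
  -- take the largest index with nonzero coefficient
  have hex : ∃ t, g t ≠ 0 := ⟨i0, hi0⟩
  classical
  obtain ⟨t, ht, htmax⟩ : ∃ t, g t ≠ 0 ∧ ∀ s, t < s → g s = 0 := by
    obtain ⟨t, ht, hmax⟩ := Finset.exists_max_image (Finset.univ.filter fun s => g s ≠ 0)
      id (by
        obtain ⟨t, ht⟩ := hex
        exact ⟨t, Finset.mem_filter.2 ⟨Finset.mem_univ _, ht⟩⟩)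
    refine ⟨t, (Finset.mem_filter.1 ht).2, fun s hs => ?_⟩
    by_contra hgs
    exact absurd (hmax s (Finset.mem_filter.2 ⟨Finset.mem_univ _, hgs⟩)) (by simpa using hs)
  have h0 : f t (∑ i, g i • z i) = 0 := by rw [hg]; simp
  rw [map_sum] at h0
  simp only [LinearMap.map_smul, smul_eq_mul] at h0
  have hsingle : ∑ i, g i * f t (z i) = g t * f t (z t) := by
    apply Finset.sum_eq_single
    · intro s _ hst
      rcases lt_or_gt_of_ne hst with h | h
      · rw [hlt s t h, mul_zero]
      · rw [htmax s h, zero_mul]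
    · intro h; exact absurd (Finset.mem_univ t) h
  rw [hsingle] at h0
  exact ht (by
    rcases mul_eq_zero.1 h0 with h | h
    · exact h
    · exact absurd h (hdiag t))

/-- the linear functional on `(Fin r → Fin d) → ℚ` given by coefficients `c` -/
noncomputable def lamFun {G : Type*} [Fintype G] (c : G → ℚ) : (G → ℚ) →ₗ[ℚ] ℚ where
  toFun z := ∑ g, c g * z g
  map_add' x y := by simp [mul_add, Finset.sum_add_distrib]
  map_smul' a x := by simp [Finset.mul_sum]; ring_nf; simp [mul_assoc, mul_comm, mul_left_comm]

lemma card_le_of_li {G : Type*} [Fintype G] {n : ℕ} (z : Fin n → (G → ℚ))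
    (h : LinearIndependent ℚ z) : n ≤ Fintype.card G := by
  have := h.fintype_card_le_finrank
  simpa [Module.finrank_fintype_fun_eq_card] using this

end Tri




section Fac
variable {d r n : ℕ}



lemma basisMatT_surj (U : Submodule ℚ (Fin d → ℚ)) (h : finrank ℚ U = r) :
    Function.Surjective ((basisMat U h)ᵀ).mulVecLin := by
  have hrk : ((basisMat U h)ᵀ).rank = r := by
    rw [Matrix.rank_transpose]; exact basisMat_rank U h
  have : LinearMap.range ((basisMat U h)ᵀ).mulVecLin = ⊤ := by
    apply Submodule.eq_top_of_finrank_eq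
    rw [← Matrix.rank, hrk, Module.finrank_fintype_fun_eq_card, Fintype.card_fin]
  exact LinearMap.range_eq_top.mp this

lemma factor_lemma (X : Matrix (Fin d) (Fin d) ℚ) (hr : X.rank = r)
    (U W : Submodule ℚ (Fin d → ℚ))
    (hU : LinearMap.range X.mulVecLin = U) (hfU : finrank ℚ U = r)
    (hW : LinearMap.range Xᵀ.mulVecLin = W) (hfW : finrank ℚ W = r) :
    ∃ A : Matrix (Fin r) (Fin r) ℚ, IsUnit A ∧
      X = basisMat U hfU * A * (basisMat W hfW)ᵀ := by
  obtain ⟨B, hB⟩ := exists_factor_left (basisMat U hfU) X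
    (by rw [basisMat_range, ← hU])
  have hrB : B.rank = r := by
    have h2 : (basisMat U hfU * B).rank = B.rank := rank_mul_eq_of_inj _ _ (basisMat_inj U hfU)
    rw [hB] at hr
    exact h2.symm.trans hr
  have hXT : Xᵀ = Bᵀ * (basisMat U hfU)ᵀ := by rw [hB, Matrix.transpose_mul]
  have hle : W ≤ LinearMap.range (Bᵀ).mulVecLin := by
    rw [← hW, hXT, Matrix.mulVecLin_mul]
    exact LinearMap.range_comp_le_range _ _
  have hWB : W = LinearMap.range (Bᵀ).mulVecLin := by
    apply Submodule.eq_of_le_of_finrank_le hle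
    have : finrank ℚ (LinearMap.range (Bᵀ).mulVecLin) = r := by
      rw [← Matrix.rank, Matrix.rank_transpose, hrB]
    rw [this, hfW]
  obtain ⟨C, hC⟩ := exists_factor_left (basisMat W hfW) Bᵀ (by rw [basisMat_range, ← hWB])
  have hBC : B = Cᵀ * (basisMat W hfW)ᵀ := by
    have := congrArg Matrix.transpose hC
    rwa [Matrix.transpose_transpose, Matrix.transpose_mul] at this
  refine ⟨Cᵀ, ?_, by rw [hB, hBC, Matrix.mul_assoc]⟩
  apply isUnit_of_rank_eq
  refine le_antisymm (le_trans (Matrix.rank_le_card_width _) (by simp)) ?_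
  calc r = B.rank := hrB.symm
    _ ≤ (Cᵀ).rank := by rw [hBC]; exact Matrix.rank_mul_le_left _ _

lemma rank_sandwich {d r : ℕ}
    (P1 P2 : Matrix (Fin d) (Fin r) ℚ) (Q1 Q2 : Matrix (Fin r) (Fin d) ℚ)
    (A1 A2 : Matrix (Fin r) (Fin r) ℚ)
    (hP1 : Function.Injective P1.mulVecLin) (hQ2 : Function.Surjective Q2.mulVecLin)
    (hA1 : IsUnit A1) (hA2 : IsUnit A2) :
    ((P1 * A1 * Q1) * (P2 * A2 * Q2)).rank = (Q1 * P2).rank := by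
  have e : (P1 * A1 * Q1) * (P2 * A2 * Q2)
      = P1 * (A1 * ((Q1 * P2 * A2) * Q2)) := by
    simp only [Matrix.mul_assoc]
  rw [e, rank_mul_eq_of_inj _ _ hP1,
    rank_mul_eq_of_inj _ _ (isUnit_mulVecLin_bij hA1).1,
    rank_mul_eq_of_surj _ _ hQ2,
    rank_mul_eq_of_surj _ _ (isUnit_mulVecLin_bij hA2).2]

end Fac





lemma lamFun_apply {G : Type} [Fintype G] (c z : G → ℚ) : lamFun c z = ∑ g, c g * z g := rfl

lemma core_stable {d L r : ℕ} (X : ℕ → ℕ → Matrix (Fin d) (Fin d) ℚ)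
    (hid : ∀ i, X i i = 1)
    (comp : ∀ i j k, i ≤ j → j ≤ k → k ≤ L → X i j * X j k = X i k)
    (hrank : ∀ i j, i < j → j ≤ L → (X i j).rank = r)
    (hL : d ^ d + 2 ≤ L) :
    ∃ i j, i < j ∧ j ≤ L ∧ MatStable (X i j) := by
  classical
  by_contra hcon
  push_neg at hcon
  have hns : ∀ i j, i < j → j ≤ L → ¬ MatStable (X i j) := by
    intro i j hij hjL hst
    exact hcon i j hij hjL hst
  have hdd : 0 < d ^ d := by
    rcases Nat.eq_zero_or_pos d with h | h
    · simp [h]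
    · exact Nat.pow_pos h
  have hLpos : 3 ≤ L := by omega
  -- r ≥ 1
  have hr1 : 1 ≤ r := by
    rcases Nat.eq_zero_or_pos r with h0 | h
    · exfalso
      apply hns 0 1 (by omega) (by omega)
      have hX01 : (X 0 1).rank = 0 := by rw [hrank 0 1 (by omega) (by omega), h0]
      have : (X 0 1 * X 0 1).rank = 0 := by
        have := Matrix.rank_mul_le_left (X 0 1) (X 0 1)
        omega
      unfold MatStable
      omega
    · exact h
  have hrd : r ≤ d := by
    have := hrank 0 1 (by omega) (by omega)
    have h2 := Matrix.rank_le_card_height (X 0 1)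
    rw [this, Fintype.card_fin] at h2
    exact h2
  have hd1 : 1 ≤ d := le_trans hr1 hrd
  -- unstable means strict rank drop
  have hdrop : ∀ i j, i < j → j ≤ L → (X i j * X i j).rank < r := by
    intro i j hij hjL
    have hle := Matrix.rank_mul_le_left (X i j) (X i j)
    have hne := hns i j hij hjL
    unfold MatStable at hne
    rw [hrank i j hij hjL] at hle hne
    omega
  -- column spaces
  set U : ℕ → Submodule ℚ (Fin d → ℚ) :=
    fun s => LinearMap.range (X s (s+1)).mulVecLin with hUdef
  have hfinU : ∀ s, s < L → finrank ℚ (U s) = r := by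
    intro s hs
    exact hrank s (s+1) (by omega) (by omega)
  have hU : ∀ s t, s < t → t ≤ L → LinearMap.range (X s t).mulVecLin = U s := by
    intro s t hst htL
    rcases Nat.eq_or_lt_of_le (Nat.succ_le_of_lt hst) with he | hlt
    · rw [← he]
    · have hdec : X s t = X s (s+1) * X (s+1) t :=
        (comp s (s+1) t (by omega) (by omega) htL).symm
      have hle : LinearMap.range (X s t).mulVecLin ≤ U s := by
        rw [hdec, Matrix.mulVecLin_mul]
        exact LinearMap.range_comp_le_range _ _
      apply Submodule.eq_of_le_of_finrank_le hle
      have h1 : finrank ℚ (LinearMap.range (X s t).mulVecLin) = r := hrank s t hst htL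
      rw [h1, hfinU s (by omega)]
  -- row spaces
  set W : ℕ → Submodule ℚ (Fin d → ℚ) :=
    fun t => LinearMap.range ((X (t-1) t)ᵀ).mulVecLin with hWdef
  have hfinW : ∀ t, 1 ≤ t → t ≤ L → finrank ℚ (W t) = r := by
    intro t h1 h2
    show finrank ℚ (LinearMap.range ((X (t-1) t)ᵀ).mulVecLin) = r
    rw [← Matrix.rank, Matrix.rank_transpose]
    exact hrank (t-1) t (by omega) h2
  have hW : ∀ s t, s < t → t ≤ L → LinearMap.range ((X s t)ᵀ).mulVecLin = W t := by
    intro s t hst htL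
    rcases Nat.eq_or_lt_of_le (Nat.succ_le_of_lt hst) with he | hlt
    · have : s = t - 1 := by omega
      rw [this]
    · have hdec : X s t = X s (t-1) * X (t-1) t :=
        (comp s (t-1) t (by omega) (by omega) htL).symm
      have hle : LinearMap.range ((X s t)ᵀ).mulVecLin ≤ W t := by
        rw [hdec, Matrix.transpose_mul, Matrix.mulVecLin_mul]
        exact LinearMap.range_comp_le_range _ _
      apply Submodule.eq_of_le_of_finrank_le hle
      have h1 : finrank ℚ (LinearMap.range ((X s t)ᵀ).mulVecLin) = r := by
        rw [← Matrix.rank, Matrix.rank_transpose]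
        exact hrank s t hst htL
      rw [h1, hfinW t (by omega) htL]
  -- basis matrices
  set P : ℕ → Matrix (Fin d) (Fin r) ℚ :=
    fun s => if h : s < L then basisMat (U s) (hfinU s h) else 0 with hPdef
  set Q : ℕ → Matrix (Fin r) (Fin d) ℚ :=
    fun t => if h : 1 ≤ t ∧ t ≤ L then (basisMat (W t) (hfinW t h.1 h.2))ᵀ else 0 with hQdef
  -- factorization for each pair
  have hfac : ∀ s t, s < t → t ≤ L →
      ∃ A : Matrix (Fin r) (Fin r) ℚ, IsUnit A ∧ X s t = P s * A * Q t := by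
    intro s t hst htL
    have hsL : s < L := by omega
    have ht1 : 1 ≤ t := by omega
    obtain ⟨A, hA, hXf⟩ := factor_lemma (X s t) (hrank s t hst htL) (U s) (W t)
      (hU s t hst htL) (hfinU s hsL) (hW s t hst htL) (hfinW t ht1 htL)
    refine ⟨A, hA, ?_⟩
    rw [hXf, hPdef, hQdef]
    simp only [hsL, dif_pos, ht1, htL, and_self]
  have hPinj : ∀ s, s < L → Function.Injective (P s).mulVecLin := by
    intro s hs
    rw [hPdef]; simp only [hs, dif_pos]
    exact basisMat_inj _ _
  have hQsurj : ∀ t, 1 ≤ t → t ≤ L → Function.Surjective (Q t).mulVecLin := by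
    intro t h1 h2
    rw [hQdef]; simp only [h1, h2, and_self, dif_pos]
    exact basisMatT_surj _ _
  -- the rank of Q t * P s computes squares
  have hQP : ∀ s t, s < t → t ≤ L → (Q t * P s).rank = (X s t * X s t).rank := by
    intro s t hst htL
    obtain ⟨A, hA, hXf⟩ := hfac s t hst htL
    rw [hXf]
    exact (rank_sandwich (P s) (P s) (Q t) (Q t) A A
      (hPinj s (by omega)) (hQsurj t (by omega) htL) hA hA).symm
  -- interior points: Q t * P t invertible
  have hdiagU : ∀ t, 1 ≤ t → t < L → IsUnit (Q t * P t) := by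
    intro t h1 h2
    obtain ⟨A1, hA1, hX1⟩ := hfac 0 t h1 (by omega)
    obtain ⟨A2, hA2, hX2⟩ := hfac t L h2 (le_refl L)
    have hcomp : X 0 t * X t L = X 0 L := comp 0 t L (by omega) (by omega) (le_refl L)
    have hrk : (X 0 t * X t L).rank = r := by rw [hcomp]; exact hrank 0 L (by omega) (le_refl L)
    rw [hX1, hX2] at hrk
    rw [rank_sandwich (P 0) (P t) (Q t) (Q L) A1 A2
      (hPinj 0 (by omega)) (hQsurj L (by omega) (le_refl L)) hA1 hA2] at hrk
    exact isUnit_of_rank_eq _ hrk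
  -- build the triangular family
  set G := (Fin r → Fin d)
  set z : Fin (L-1) → (G → ℚ) :=
    fun t' => fun g => ((P ((t' : ℕ)+1)).submatrix g id).det with hzdef
  set f : Fin (L-1) → ((G → ℚ) →ₗ[ℚ] ℚ) :=
    fun t' => lamFun (fun g => ∏ i, Q ((t' : ℕ)+1) i (g i)) with hfdef
  have hpair : ∀ s' t' : Fin (L-1), f t' (z s') = (Q ((t' : ℕ)+1) * P ((s' : ℕ)+1)).det := by
    intro s' t'
    rw [hfdef, hzdef, lamFun_apply, det_mul_expand]
  have hdiag : ∀ t', f t' (z t') ≠ 0 := by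
    intro t'
    rw [hpair]
    have h1 : 1 ≤ (t' : ℕ)+1 := by omega
    have h2 : (t' : ℕ)+1 < L := by have := t'.2; omega
    have := hdiagU ((t' : ℕ)+1) h1 h2
    rw [Matrix.isUnit_iff_isUnit_det] at this
    exact this.ne_zero
  have hlt : ∀ s' t' : Fin (L-1), s' < t' → f t' (z s') = 0 := by
    intro s' t' hst
    rw [hpair]
    have hst' : (s' : ℕ)+1 < (t' : ℕ)+1 := by
      have : (s' : ℕ) < (t' : ℕ) := hst
      omega
    have htL : (t' : ℕ)+1 ≤ L := by have := t'.2; omega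
    by_contra hdet
    have hunit : IsUnit (Q ((t' : ℕ)+1) * P ((s' : ℕ)+1)) :=
      (Matrix.isUnit_iff_isUnit_det _).mpr (isUnit_iff_ne_zero.mpr hdet)
    have hrk : (Q ((t' : ℕ)+1) * P ((s' : ℕ)+1)).rank = r := by
      have := Matrix.rank_of_isUnit _ hunit
      rw [this, Fintype.card_fin]
    rw [hQP _ _ hst' htL] at hrk
    have := hdrop ((s' : ℕ)+1) ((t' : ℕ)+1) hst' htL
    omega
  have hli := triangular_li z f hdiag hlt
  have hcard := card_le_of_li z hli
  have : Fintype.card G = d ^ r := by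
    show Fintype.card (Fin r → Fin d) = d ^ r
    rw [Fintype.card_fun, Fintype.card_fin, Fintype.card_fin]
  rw [this] at hcard
  have hpow : d ^ r ≤ d ^ d := Nat.pow_le_pow_right hd1 hrd
  omega



section Extract
variable {d B : ℕ} (M : ℕ → ℕ → Matrix (Fin d) (Fin d) ℚ)

lemma rank_sub (comp : ∀ i j k, i ≤ j → j ≤ k → k ≤ B → M i j * M j k = M i k)
    {a i j b : ℕ} (h1 : a ≤ i) (h2 : i ≤ j) (h3 : j ≤ b) (h4 : b ≤ B) :
    (M a b).rank ≤ (M i j).rank := by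
  have e1 : M a b = M a i * M i b := (comp a i b h1 (le_trans h2 h3) h4).symm
  have e2 : M i b = M i j * M j b := (comp i j b h2 h3 h4).symm
  calc (M a b).rank ≤ (M i b).rank := by rw [e1]; exact Matrix.rank_mul_le_right _ _
    _ ≤ (M i j).rank := by rw [e2]; exact Matrix.rank_mul_le_left _ _

lemma extract (comp : ∀ i j k, i ≤ j → j ≤ k → k ≤ B → M i j * M j k = M i k)
    (m : ℕ) (hm : 1 ≤ m) :
    ∀ kk a b : ℕ, a + m ^ (kk+1) ≤ b → b ≤ B → d ≤ (M a b).rank + kk →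
    ∃ (q : ℕ → ℕ) (rr : ℕ),
      (∀ s t, s < t → t < m → q s < q t) ∧
      (∀ s, s < m → a ≤ q s ∧ q s ≤ b) ∧
      (∀ s t, s < t → t < m → (M (q s) (q t)).rank = rr) := by
  intro kk
  induction kk with
  | zero =>
    intro a b hab hbB hd
    rw [show (0:ℕ)+1 = 1 from rfl, pow_one] at hab
    refine ⟨fun s => a + s, d, ?_, ?_, ?_⟩
    · intro s t hst htm
      show a + s < a + t
      omega
    · intro s hs
      refine ⟨by show a ≤ a + s; omega, by show a + s ≤ b; omega⟩
    intro s t hst htm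
    show (M (a+s) (a+t)).rank = d
    have hub := Matrix.rank_le_card_height (M (a+s) (a+t))
    rw [Fintype.card_fin] at hub
    have hlb : (M a b).rank ≤ (M (a+s) (a+t)).rank :=
      rank_sub M comp (by omega) (by omega) (by omega) hbB
    omega
  | succ kk ih =>
    intro a b hab hbB hd
    set c : ℕ → ℕ := fun s => a + s * m ^ (kk+1) with hc
    have hcm : c m ≤ b := by
      have hpow : m ^ (kk + 1 + 1) = m * m ^ (kk+1) := by ring
      simp only [hc]
      omega
    by_cases hall : ∀ s, s < m → (M (c s) (c (s+1))).rank = (M a b).rank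
    · refine ⟨c, (M a b).rank, ?_, ?_, ?_⟩
      · intro s t hst htm
        have hp : 0 < m ^ (kk+1) := Nat.pow_pos (by omega)
        simp only [hc]
        have : s * m ^ (kk+1) < t * m ^ (kk+1) := (Nat.mul_lt_mul_right hp).mpr hst
        omega
      · intro s hs
        constructor
        · simp only [hc]; omega
        · have : c s ≤ c m := by
            simp only [hc]
            have : s * m ^ (kk+1) ≤ m * m ^ (kk+1) := Nat.mul_le_mul_right _ (by omega)
            omega
          omega
      · intro s t hst htm
        have hle : (M (c s) (c t)).rank ≤ (M a b).rank := by
          rw [← hall s (by omega)]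
          have e : M (c s) (c t) = M (c s) (c (s+1)) * M (c (s+1)) (c t) := by
            refine (comp _ _ _ ?_ ?_ ?_).symm
            · simp only [hc]
              have : s * m ^ (kk+1) ≤ (s+1) * m ^ (kk+1) := Nat.mul_le_mul_right _ (by omega)
              omega
            · simp only [hc]
              have : (s+1) * m ^ (kk+1) ≤ t * m ^ (kk+1) := Nat.mul_le_mul_right _ (by omega)
              omega
            · have : c t ≤ c m := by
                simp only [hc]
                have : t * m ^ (kk+1) ≤ m * m ^ (kk+1) := Nat.mul_le_mul_right _ (by omega)
                omega
              omega
          rw [e]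
          exact Matrix.rank_mul_le_left _ _
        have hge : (M a b).rank ≤ (M (c s) (c t)).rank := by
          refine rank_sub M comp ?_ ?_ ?_ hbB
          · simp only [hc]; omega
          · simp only [hc]
            have : s * m ^ (kk+1) ≤ t * m ^ (kk+1) := Nat.mul_le_mul_right _ (by omega)
            omega
          · have : c t ≤ c m := by
              simp only [hc]
              have : t * m ^ (kk+1) ≤ m * m ^ (kk+1) := Nat.mul_le_mul_right _ (by omega)
              omega
            omega
        omega
    · push_neg at hall
      obtain ⟨s, hsm, hne⟩ := hall
      have hcs1 : c (s+1) ≤ b := by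
        have : c (s+1) ≤ c m := by
          simp only [hc]
          have : (s+1) * m ^ (kk+1) ≤ m * m ^ (kk+1) := Nat.mul_le_mul_right _ (by omega)
          omega
        omega
      have hge : (M a b).rank ≤ (M (c s) (c (s+1))).rank := by
        refine rank_sub M comp ?_ ?_ ?_ hbB
        · simp only [hc]; omega
        · simp only [hc]
          have : s * m ^ (kk+1) ≤ (s+1) * m ^ (kk+1) := Nat.mul_le_mul_right _ (by omega)
          omega
        · exact hcs1
      have hgt : (M a b).rank < (M (c s) (c (s+1))).rank := by omega
      obtain ⟨q, rr, hq1, hq2, hq3⟩ := ih (c s) (c (s+1)) (by simp only [hc]; ring_nf; omega)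
        (by omega) (by omega)
      refine ⟨q, rr, hq1, ?_, hq3⟩
      intro t htm
      have := hq2 t htm
      constructor
      · have : a ≤ c s := by simp only [hc]; omega
        omega
      · omega

end Extract






lemma find_stable {d B : ℕ} (M : ℕ → ℕ → Matrix (Fin d) (Fin d) ℚ)
    (hid : ∀ i, M i i = 1)
    (comp : ∀ i j k, i ≤ j → j ≤ k → k ≤ B → M i j * M j k = M i k)
    (hB : (d ^ d + 3) ^ (d + 1) ≤ B) :
    ∃ i j, i < j ∧ j ≤ B ∧ MatStable (M i j) := by
  set m := d ^ d + 3 with hm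
  obtain ⟨q, rr, hq1, hq2, hq3⟩ := extract M comp m (by omega) d 0 B (by omega) (le_refl B)
    (by omega)
  set X : ℕ → ℕ → Matrix (Fin d) (Fin d) ℚ := fun s t => M (q s) (q t) with hX
  have hqmono : ∀ s t, s ≤ t → t ≤ m - 1 → q s ≤ q t := by
    intro s t hst htm
    rcases Nat.eq_or_lt_of_le hst with he | hlt
    · rw [he]
    · exact le_of_lt (hq1 s t hlt (by omega))
  have hcomp : ∀ i j k, i ≤ j → j ≤ k → k ≤ m - 1 → X i j * X j k = X i k := by
    intro i j k hij hjk hkL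
    exact comp (q i) (q j) (q k) (hqmono i j hij (by omega)) (hqmono j k hjk hkL)
      ((hq2 k (by omega)).2.trans (le_refl B))
  have hrank : ∀ i j, i < j → j ≤ m - 1 → (X i j).rank = rr := by
    intro i j hij hjL
    exact hq3 i j hij (by omega)
  obtain ⟨i, j, hij, hjL, hst⟩ := core_stable X (fun i => hid (q i)) hcomp hrank (by omega)
  exact ⟨q i, q j, hq1 i j hij (by omega), (hq2 j (by omega)).2, hst⟩


section Words
variable {α : Type*} (ω : List α → ℤ)

lemma omega_ivt (hω_app : ∀ u v : List α, ω (u ++ v) = ω u + ω v)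
    (hω_letter : ∀ σ : α, ω [σ] = -1 ∨ ω [σ] = 0 ∨ ω [σ] = 1) :
    ∀ (s u : List α) (y : ℤ), ω u ≤ y → y ≤ ω (u ++ s) →
    ∃ v, u <+: v ∧ v <+: (u ++ s) ∧ ω v = y := by
  intro s
  induction s with
  | nil =>
    intro u y h1 h2
    rw [List.append_nil] at h2
    exact ⟨u, List.prefix_refl u, by simp, le_antisymm h1 h2⟩
  | cons b s' ih =>
    intro u y h1 h2
    rcases eq_or_lt_of_le h1 with he | hlt
    · exact ⟨u, List.prefix_refl u, List.prefix_append u _, he⟩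
    · have hb : ω (u ++ [b]) ≤ y := by
        have := hω_letter b
        have happ := hω_app u [b]
        omega
      have heq : (u ++ [b]) ++ s' = u ++ (b :: s') := by simp
      have h2' : y ≤ ω ((u ++ [b]) ++ s') := by rw [heq]; exact h2
      obtain ⟨v, hv1, hv2, hv3⟩ := ih (u ++ [b]) y hb h2'
      refine ⟨v, ?_, ?_, hv3⟩
      · exact List.IsPrefix.trans (List.prefix_append u [b]) hv1
      · rwa [heq] at hv2

lemma chain_exists (hω_nil : ω [] = 0)
    (hω_app : ∀ u v : List α, ω (u ++ v) = ω u + ω v)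
    (hω_letter : ∀ σ : α, ω [σ] = -1 ∨ ω [σ] = 0 ∨ ω [σ] = 1)
    (p : List α) :
    ∀ K : ℕ, (K : ℤ) ≤ ω p →
    ∃ c : ℕ → List α, (∀ k, k ≤ K → ω (c k) = k) ∧
      (∀ i j, i ≤ j → j ≤ K → c i <+: c j) ∧ (∀ k, k ≤ K → c k <+: p) := by
  intro K
  induction K with
  | zero =>
    intro _
    refine ⟨fun _ => [], ?_, ?_, ?_⟩
    · intro k hk; interval_cases k; simpa using hω_nil
    · intro i j _ _; exact List.prefix_refl _
    · intro k _; exact List.nil_prefix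
  | succ K ih =>
    intro hp
    obtain ⟨c, hc1, hc2, hc3⟩ := ih (by push_cast at hp ⊢; omega)
    have hcKp : c K <+: p := hc3 K (le_refl K)
    obtain ⟨s, hs⟩ := hcKp
    have h1 : ω (c K) ≤ ((K+1 : ℕ) : ℤ) := by rw [hc1 K (le_refl K)]; push_cast; omega
    have h2 : ((K+1 : ℕ) : ℤ) ≤ ω (c K ++ s) := by rw [hs]; exact_mod_cast hp
    obtain ⟨v, hv1, hv2, hv3⟩ := omega_ivt ω hω_app hω_letter s (c K) ((K+1 : ℕ) : ℤ) h1 h2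
    rw [hs] at hv2
    classical
    refine ⟨fun k => if k ≤ K then c k else v, ?_, ?_, ?_⟩
    · intro k hk
      by_cases h : k ≤ K
      · simp only [h, if_pos]; exact hc1 k h
      · have : k = K + 1 := by omega
        simp only [h, if_neg, if_false]
        rw [this]; exact_mod_cast hv3
    · intro i j hij hjK
      by_cases hj : j ≤ K
      · have hi : i ≤ K := le_trans hij hj
        simp only [hi, hj, if_pos]; exact hc2 i j hij hj
      · by_cases hi : i ≤ K
        · simp only [hi, hj, if_pos, if_neg, if_false]
          exact List.IsPrefix.trans (hc2 i K hi (le_refl K)) hv1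
        · simp only [hi, hj, if_neg, if_false]
          exact List.prefix_refl _
    · intro k _
      by_cases h : k ≤ K
      · simp only [h, if_pos]; exact hc3 k h
      · simp only [h, if_neg, if_false]; exact hv2

end Words


section Auto
variable {α : Type*} (ω : List α → ℤ)

/-- threshold automaton -/
noncomputable def wdfa (hω_letter : ∀ σ : α, ω [σ] = -1 ∨ ω [σ] = 0 ∨ ω [σ] = 1) (N : ℕ) :
    DFA α (Option (Fin (N+2))) where
  step s a :=
    match s with
    | none => none
    | some k =>
      if hsink : (k : ℕ) = N+1 then some k
      else
        if h : ((k : ℕ) : ℤ) + ω [a] < 0 then none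
        else some ⟨(((k : ℕ) : ℤ) + ω [a]).toNat, by
          rcases hω_letter a with h1 | h1 | h1 <;>
          · have hk2 := k.2
            simp only [h1]
            omega⟩
  start := some ⟨0, by omega⟩
  accept := {s | s ≠ none}

variable (hω_letter : ∀ σ : α, ω [σ] = -1 ∨ ω [σ] = 0 ∨ ω [σ] = 1)

def good (w : List α) : Prop := ∀ u : List α, u <+: w → 0 ≤ ω u

def bigw (N : ℕ) (w : List α) : Prop := ∃ v, v <+: w ∧ good ω v ∧ (N : ℤ) < ω v

lemma wdfa_invariant (hω_nil : ω [] = 0)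
    (hω_app : ∀ u v : List α, ω (u ++ v) = ω u + ω v) (N : ℕ) (w : List α) :
    ((wdfa ω hω_letter N).eval w = none → ¬ good ω w) ∧
    (∀ k : Fin (N+2), (wdfa ω hω_letter N).eval w = some k →
      (((k : ℕ) = N+1 ∧ bigw ω N w) ∨ ((k : ℕ) ≤ N ∧ good ω w ∧ ω w = (k : ℕ)))) := by
  induction w using List.reverseRecOn with
  | nil =>
    constructor
    · intro h
      exact absurd h (by simp [wdfa, DFA.eval, DFA.evalFrom])
    · intro k hk
      have hk0 : (k : ℕ) = 0 := by
        have : (wdfa ω hω_letter N).eval ([] : List α) = some ⟨0, by omega⟩ := rfl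
        rw [this] at hk
        have := (Option.some_injective _ hk)
        have := congrArg Fin.val this
        simpa using this.symm
      right
      refine ⟨by omega, ?_, ?_⟩
      · intro u hu
        rw [List.prefix_nil.mp hu, hω_nil]
      · rw [hω_nil, hk0]; simp
  | append_singleton w a ih =>
    obtain ⟨ihn, ihs⟩ := ih
    have heval : (wdfa ω hω_letter N).eval (w ++ [a])
        = (wdfa ω hω_letter N).step ((wdfa ω hω_letter N).eval w) a :=
      DFA.evalFrom_append_singleton _ _ _ _
    have hgoodmono : good ω (w ++ [a]) → good ω w := by
      intro hg u hu
      exact hg u (hu.trans (List.prefix_append w [a]))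
    have hprefix_cases : ∀ u : List α, u <+: (w ++ [a]) → u <+: w ∨ u = w ++ [a] := by
      intro u hu
      rcases List.prefix_concat_iff.mp hu with h | h
      · right; exact h
      · left; exact h
    cases heq : (wdfa ω hω_letter N).eval w with
    | none =>
      rw [heq] at heval
      have hstep : (wdfa ω hω_letter N).eval (w ++ [a]) = none := heval
      constructor
      · intro _ hg
        exact ihn heq (hgoodmono hg)
      · intro k hk
        rw [hstep] at hk
        exact absurd hk (by simp)
    | some k =>
      rw [heq] at heval
      rcases ihs k heq with ⟨hk1, hbig⟩ | ⟨hk1, hgood, homega⟩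
      · -- sink state
        have hstep : (wdfa ω hω_letter N).eval (w ++ [a]) = some k := by
          rw [heval]
          simp [wdfa, hk1]
        constructor
        · intro h; rw [hstep] at h; exact absurd h (by simp)
        · intro k' hk'
          rw [hstep] at hk'
          have : k' = k := (Option.some_injective _ hk').symm
          subst this
          left
          obtain ⟨v, hv1, hv2, hv3⟩ := hbig
          exact ⟨hk1, v, hv1.trans (List.prefix_append w [a]), hv2, hv3⟩
      · -- normal state
        have hkne : ¬ ((k : ℕ) = N+1) := by omega
        have hωwa : ω (w ++ [a]) = ((k : ℕ) : ℤ) + ω [a] := by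
          rw [hω_app, homega]
        by_cases hneg : ((k : ℕ) : ℤ) + ω [a] < 0
        · have hstep : (wdfa ω hω_letter N).eval (w ++ [a]) = none := by
            rw [heval]
            simp [wdfa, hkne, hneg]
          constructor
          · intro _ hg
            have := hg (w ++ [a]) (List.prefix_refl _)
            omega
          · intro k' hk'
            rw [hstep] at hk'
            exact absurd hk' (by simp)
        · have hstep : (wdfa ω hω_letter N).eval (w ++ [a])
              = some ⟨(((k : ℕ) : ℤ) + ω [a]).toNat, by
                  rcases hω_letter a with h1 | h1 | h1 <;>
                  · have hk2 := k.2
                    simp only [h1]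
                    omega⟩ := by
            rw [heval]
            simp [wdfa, hkne, hneg]
          have hgood' : good ω (w ++ [a]) := by
            intro u hu
            rcases hprefix_cases u hu with h | h
            · exact hgood u h
            · rw [h]; omega
          constructor
          · intro h; rw [hstep] at h; exact absurd h (by simp)
          · intro k' hk'
            rw [hstep] at hk'
            have hval : (k' : ℕ) = (((k : ℕ) : ℤ) + ω [a]).toNat := by
              have := (Option.some_injective _ hk').symm
              exact congrArg Fin.val this
            by_cases hbig' : (k' : ℕ) = N + 1
            · left
              refine ⟨hbig', w ++ [a], List.prefix_refl _, hgood', ?_⟩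
              rw [hωwa]
              omega
            · right
              refine ⟨by omega, hgood', ?_⟩
              rw [hωwa]
              omega
  
end Auto

end CoverAux

open CoverAux in
/-- For monoid morphisms `φ : Σ* → M_d(ℚ)` and `ω : Σ* → ℤ` (with letter weights in
`{-1,0,1}`), there is a regular language `L` containing the coverability language
`L_C(ω)` such that every word `w ∈ L \ L_C(ω)` factors as `w = w₁ u w₂` with `φ(u)`
stable, `ω(u) > 0`, and every prefix of `w₁u` of nonnegative weight. -/
theorem cover_regular_approximation {α : Type*} [Fintype α] (d : ℕ)
    (φ : List α → Matrix (Fin d) (Fin d) ℚ)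
    (hφ_nil : φ [] = 1) (hφ_app : ∀ u v : List α, φ (u ++ v) = φ u * φ v)
    (ω : List α → ℤ)
    (hω_nil : ω [] = 0) (hω_app : ∀ u v : List α, ω (u ++ v) = ω u + ω v)
    (hω_letter : ∀ σ : α, ω [σ] = -1 ∨ ω [σ] = 0 ∨ ω [σ] = 1) :
    ∃ L : Set (List α), Language.IsRegular (L : Language α) ∧
      coverLang ω ⊆ L ∧
      ∀ w ∈ L \ coverLang ω,
        ∃ w₁ u w₂ : List α, w = w₁ ++ u ++ w₂ ∧ MatStable (φ u) ∧ 0 < ω u ∧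
          ∀ w' : List α, w' <+: (w₁ ++ u) → 0 ≤ ω w' := by
  classical
  set N : ℕ := (d ^ d + 3) ^ (d + 1) with hN
  refine ⟨((wdfa ω hω_letter N).accepts : Set (List α)),
    ⟨Option (Fin (N+2)), inferInstance, wdfa ω hω_letter N, rfl⟩, ?_, ?_⟩
  · intro w hw
    have hg : good ω w := hw
    have hinv := wdfa_invariant ω hω_letter hω_nil hω_app N w
    change w ∈ (wdfa ω hω_letter N).accepts
    rw [DFA.mem_accepts]
    cases heval : (wdfa ω hω_letter N).eval w with
    | none => exact absurd hg (hinv.1 heval)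
    | some k => simp [wdfa]
  · intro w hw
    obtain ⟨hwL, hwnc⟩ := hw
    have hwL' : w ∈ (wdfa ω hω_letter N).accepts := hwL
    rw [DFA.mem_accepts] at hwL'
    have hinv := wdfa_invariant ω hω_letter hω_nil hω_app N w
    cases heval : (wdfa ω hω_letter N).eval w with
    | none =>
      rw [heval] at hwL'
      exact absurd rfl hwL'
    | some k =>
      rcases hinv.2 k heval with ⟨_, hbig⟩ | ⟨_, hgood, _⟩
      · obtain ⟨p, hpw, hpgood, hpN⟩ := hbig
        have hpN' : ((N + 1 : ℕ) : ℤ) ≤ ω p := by push_cast; omega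
        obtain ⟨c, hc1, hc2, hc3⟩ :=
          chain_exists ω hω_nil hω_app hω_letter p (N+1) hpN'
        set M : ℕ → ℕ → Matrix (Fin d) (Fin d) ℚ :=
          fun i j => φ ((c j).drop (c i).length) with hM
        have hseg : ∀ i j, i ≤ j → j ≤ N+1 →
            c i ++ (c j).drop (c i).length = c j := by
          intro i j hij hjK
          obtain ⟨s, hs⟩ := hc2 i j hij hjK
          rw [← hs, List.drop_left]
        have hid : ∀ i, M i i = 1 := by
          intro i
          show φ ((c i).drop (c i).length) = 1
          rw [List.drop_length, hφ_nil]
        have hcomp : ∀ i j k, i ≤ j → j ≤ k → k ≤ N+1 → M i j * M j k = M i k := by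
          intro i j k hij hjk hkK
          show φ _ * φ _ = φ _
          rw [← hφ_app]
          have e1 := hseg i j hij (le_trans hjk hkK)
          have e2 := hseg j k hjk hkK
          have e3 := hseg i k (le_trans hij hjk) hkK
          have h4 : c i ++ ((c j).drop (c i).length ++ (c k).drop (c j).length)
              = c i ++ (c k).drop (c i).length := by
            rw [← List.append_assoc, e1, e2, e3]
          exact congrArg φ (List.append_cancel_left h4)
        obtain ⟨i, j, hij, hjB, hstable⟩ := find_stable M hid hcomp (by omega)
        obtain ⟨w2, hw2⟩ : ∃ w2, c j ++ w2 = w := by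
          obtain ⟨s1, hs1⟩ := hc3 j hjB
          obtain ⟨s2, hs2⟩ := hpw
          exact ⟨s1 ++ s2, by rw [← List.append_assoc, hs1, hs2]⟩
        have hsegij := hseg i j (le_of_lt hij) hjB
        refine ⟨c i, (c j).drop (c i).length, w2, ?_, hstable, ?_, ?_⟩
        · rw [hsegij, hw2]
        · have h1 := hc1 i (by omega)
          have h2 := hc1 j hjB
          have h3 := hω_app (c i) ((c j).drop (c i).length)
          rw [hsegij] at h3
          rw [h1, h2] at h3
          have : (i : ℤ) < (j : ℤ) := by exact_mod_cast hij
          omega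
        · intro w' hw'
          rw [hsegij] at hw'
          exact hpgood w' (hw'.trans (hc3 j hjB))
      · exact absurd (fun u hu => hgood u hu) hwnc
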